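/- A topological space is [ω,λ]-compact if and only if it is both [μ,λ]-compact and [ω,μ']-compact for every cardinal μ' < μ. -/

import Mathlib

open Cardinal

/-- `X` is `[μ,λ]`-compact: every open cover by at most `lam` sets
has a subcover by fewer than `μ` sets. -/
def CptIn (μ lam : Cardinal) (X : Type) [TopologicalSpace X] : Prop :=
  ∀ 𝒰 : Set (Set X), (∀ U ∈ 𝒰, IsOpen U) → #𝒰 ≤ lam → ⋃₀ 𝒰 = Set.univ →
    ∃ 𝒱 ⊆ 𝒰, #𝒱 < μ ∧ ⋃₀ 𝒱 = Set.univ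

/-- `p` is a `D`-limit point of the sequence `x`. -/
def IsDLimit {I X : Type} [TopologicalSpace X] (D : Ultrafilter I) (x : I → X) (p : X) : Prop :=
  ∀ U : Set X, IsOpen U → p ∈ U → {i | x i ∈ U} ∈ D

/-- `X` is `D`-compact. -/
def DCompact {I : Type} (D : Ultrafilter I) (X : Type) [TopologicalSpace X] : Prop :=
  ∀ x : I → X, ∃ p : X, IsDLimit D x p

/-- `D` is `μ`-complete. -/
def MuComplete {I : Type} (μ : Cardinal) (D : Ultrafilter I) : Prop :=
  ∀ S : Set (Set I), #S < μ → (∀ A ∈ S, A ∈ D) → ⋂₀ S ∈ D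

/-- `D` is `(μ,lam)`-regular: there is a family of `lam`-many members of `D`
every intersection of `μ`-many of which is empty. -/
def RegUF {I : Type} (μ lam : Cardinal) (D : Ultrafilter I) : Prop :=
  ∃ (A : Type) (Z : A → Set I), #A = lam ∧ (∀ a, Z a ∈ D) ∧
    ∀ S : Set A, #S = μ → ⋂ a ∈ S, Z a = ∅

/-- The ordinal space of a cardinal, with the order topology. -/
noncomputable def ordSpace (c : Cardinal) : Type := c.ord.ToType

noncomputable instance (c : Cardinal) : LinearOrder (ordSpace c) :=
  inferInstanceAs (LinearOrder c.ord.ToType)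
noncomputable instance (c : Cardinal) : TopologicalSpace (ordSpace c) := Preorder.topology _
instance (c : Cardinal) : OrderTopology (ordSpace c) := ⟨rfl⟩

theorem stmt8 {X : Type} [TopologicalSpace X] (μ lam : Cardinal)
    (hμ : ℵ₀ ≤ μ) (hml : μ ≤ lam) :
    CptIn ℵ₀ lam X ↔
      CptIn μ lam X ∧ ∀ μ' : Cardinal, ℵ₀ ≤ μ' → μ' < μ → CptIn ℵ₀ μ' X := by
  constructor
  · intro h
    constructor
    · intro 𝒰 ho hc hu
      obtain ⟨𝒱, h1, h2, h3⟩ := h 𝒰 ho hc hu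
      exact ⟨𝒱, h1, h2.trans_le hμ, h3⟩
    · intro μ' hμ' hlt 𝒰 ho hc hu
      exact h 𝒰 ho (hc.trans (hlt.le.trans hml)) hu
  · rintro ⟨h1, h2⟩ 𝒰 ho hc hu
    obtain ⟨𝒱, hsub, hlt, hcov⟩ := h1 𝒰 ho hc hu
    by_cases hfin : #𝒱 < ℵ₀
    · exact ⟨𝒱, hsub, hfin, hcov⟩
    · push_neg at hfin
      obtain ⟨𝒲, hw, hwf, hwc⟩ :=
        h2 (#𝒱) hfin hlt 𝒱 (fun U hU => ho U (hsub hU)) le_rfl hcov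
      exact ⟨𝒲, hw.trans hsub, hwf, hwc⟩
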